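/- Let m be a positive integer. For every d ≥ m−1 there exists a 2d-separated subset S of Δ(m−1, 2d+1) ⊆ ℤ_{≥0}^m with |S| = m(m+2)/4 if m is even, and |S| = (m+1)²/4 if m is odd. -/

import Mathlib

set_option maxHeartbeats 3000000


def st15pt (d j k : ℕ) : ℕ → ℕ := fun i =>
  if j = 0 then (if i = k then 2*d+1 else 0)
  else if i = k then d - (padicValNat 2 j + k + 1)
  else if i = k + j then d
  else if i = k + 2*j then padicValNat 2 j + k + 2
  else 0

lemma st15_nu_lt (j : ℕ) (hj : j ≠ 0) : padicValNat 2 j < j :=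
  lt_of_lt_of_le (Nat.lt_two_pow_self (n := _)) (Nat.le_of_dvd (Nat.pos_of_ne_zero hj) pow_padicValNat_dvd)

lemma st15_nu_double (j : ℕ) (hj : j ≠ 0) :
    padicValNat 2 (2*j) = padicValNat 2 j + 1 := by
  rw [padicValNat.mul (by norm_num) hj, padicValNat.self (by norm_num)]; omega

lemma st15_bound (m d j k : ℕ) (hd : m - 1 ≤ d) (hj : j ≠ 0) (h : k + 2*j < m) :
    padicValNat 2 j + k + 2 ≤ d := by
  have := st15_nu_lt j hj; omega

lemma st15_sum_ind (m t c : ℕ) (h : t < m) :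
    (∑ i ∈ Finset.range m, if i = t then c else 0) = c := by
  rw [Finset.sum_ite_eq' (Finset.range m) t (fun _ => c), if_pos (Finset.mem_range.2 h)]

lemma st15_sum_ind_le (m t c : ℕ) :
    (∑ i ∈ Finset.range m, if i = t then c else 0) ≤ c := by
  rw [Finset.sum_ite_eq' (Finset.range m) t (fun _ => c)]; split <;> omega

lemma st15_sum (m d j k : ℕ) (hd : m - 1 ≤ d) (h : k + 2*j < m) :
    (∑ i ∈ Finset.range m, st15pt d j k i) = 2*d+1 := by
  rcases eq_or_ne j 0 with rfl | hj
  · simp only [st15pt, if_pos rfl]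
    exact st15_sum_ind m k _ (by omega)
  · have hb := st15_bound m d j k hd hj h
    have hrw : ∀ i, st15pt d j k i =
        (if i = k then d - (padicValNat 2 j + k + 1) else 0) +
        ((if i = k + j then d else 0) +
        (if i = k + 2*j then padicValNat 2 j + k + 2 else 0)) := by
      intro i; simp only [st15pt, if_neg hj]; split_ifs <;> omega
    rw [Finset.sum_congr rfl (fun i _ => hrw i), Finset.sum_add_distrib,
      Finset.sum_add_distrib, st15_sum_ind m _ _ (by omega), st15_sum_ind m _ _ (by omega),
      st15_sum_ind m _ _ (by omega)]
    omega

lemma st15_overlap (m d : ℕ) (hd : m - 1 ≤ d) {j k j' k' : ℕ}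
    (h : k + 2*j < m) (h' : k' + 2*j' < m) (hne : ¬(j = j' ∧ k = k')) :
    (∑ i ∈ Finset.range m, min (st15pt d j k i) (st15pt d j' k' i)) ≤ d := by
  rcases eq_or_ne j 0 with rfl | hj <;> rcases eq_or_ne j' 0 with rfl | hj'
  · -- corner vs corner
    have : ∀ i ∈ Finset.range m, min (st15pt d 0 k i) (st15pt d 0 k' i) = 0 := by
      intro i _; simp only [st15pt, if_pos rfl]; split_ifs <;> omega
    rw [Finset.sum_congr rfl this]; simp
  · -- corner vs triple
    have hb' := st15_bound m d j' k' hd hj' h'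
    have key : ∀ i ∈ Finset.range m,
        min (st15pt d 0 k i) (st15pt d j' k' i) ≤ (if i = k then d else 0) := by
      intro i _; simp only [st15pt, if_pos rfl, if_neg hj']; split_ifs <;> omega
    exact (Finset.sum_le_sum key).trans (st15_sum_ind_le m k d)
  · -- triple vs corner
    have hb := st15_bound m d j k hd hj h
    have key : ∀ i ∈ Finset.range m,
        min (st15pt d j k i) (st15pt d 0 k' i) ≤ (if i = k' then d else 0) := by
      intro i _; simp only [st15pt, if_pos rfl, if_neg hj]; split_ifs <;> omega
    exact (Finset.sum_le_sum key).trans (st15_sum_ind_le m k' d)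
  · -- triple vs triple
    have hb := st15_bound m d j k hd hj h
    have hb' := st15_bound m d j' k' hd hj' h'
    have h0 : j = j' → padicValNat 2 j = padicValNat 2 j' := fun e => by rw [e]
    have h1 : j = 2*j' → padicValNat 2 j = padicValNat 2 j' + 1 := fun e => by
      rw [e, st15_nu_double j' hj']
    have h2 : j' = 2*j → padicValNat 2 j' = padicValNat 2 j + 1 := fun e => by
      rw [e, st15_nu_double j hj]
    have key : ∀ i ∈ Finset.range m,
        min (st15pt d j k i) (st15pt d j' k' i) ≤
          (if i = k then min (d - (padicValNat 2 j + k + 1)) (st15pt d j' k' k) else 0) +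
          ((if i = k + j then min d (st15pt d j' k' (k + j)) else 0) +
          (if i = k + 2*j then min (padicValNat 2 j + k + 2) (st15pt d j' k' (k + 2*j)) else 0)) := by
      intro i _
      by_cases e1 : i = k
      · rw [e1, if_pos rfl, if_neg (by omega), if_neg (by omega)]
        have hv : st15pt d j k k = d - (padicValNat 2 j + k + 1) := by
          simp only [st15pt, if_neg hj]; split_ifs <;> omega
        rw [hv]; omega
      · by_cases e2 : i = k + j
        · rw [e2, if_neg (by omega), if_pos rfl, if_neg (by omega)]
          have hv : st15pt d j k (k + j) = d := by
            simp only [st15pt, if_neg hj]; split_ifs <;> omega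
          rw [hv]; omega
        · by_cases e3 : i = k + 2*j
          · rw [e3, if_neg (by omega), if_neg (by omega), if_pos rfl]
            have hv : st15pt d j k (k + 2*j) = padicValNat 2 j + k + 2 := by
              simp only [st15pt, if_neg hj]; split_ifs <;> omega
            rw [hv]; omega
          · have hv : st15pt d j k i = 0 := by
              simp only [st15pt, if_neg hj]
              rw [if_neg e1, if_neg e2, if_neg e3]
            rw [hv]; simp
    refine (Finset.sum_le_sum key).trans ?_
    rw [Finset.sum_add_distrib, Finset.sum_add_distrib]
    refine le_trans (add_le_add (st15_sum_ind_le m _ _)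
      (add_le_add (st15_sum_ind_le m _ _) (st15_sum_ind_le m _ _))) ?_
    simp only [st15pt, if_neg hj']

    split_ifs <;> omega


lemma st15_count (m : ℕ) :
    (∑ j ∈ Finset.range m, (m - 2*j)) * 4 =
      if Even m then m*(m+2) else (m+1)^2 := by
  induction m using Nat.twoStepInduction with
  | zero => simp
  | one => simp
  | more n ih _ =>
    have hstep : (∑ j ∈ Finset.range (n+2), (n+2 - 2*j))
        = (∑ j ∈ Finset.range n, (n - 2*j)) + (n+2) := by
      rw [Finset.sum_range_succ']
      have : ∀ j ∈ Finset.range (n+1), (n+2) - 2*(j+1) = n - 2*j := by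
        intro j _; omega
      rw [Finset.sum_congr rfl this, Finset.sum_range_succ]
      omega
    rw [hstep]
    rcases Nat.even_or_odd n with ⟨a, rfl⟩ | ⟨a, rfl⟩
    · have e1 : Even (a + a) := ⟨a, rfl⟩
      have e2 : Even (a + a + 2) := ⟨a+1, by ring⟩
      rw [if_pos e1] at ih
      rw [if_pos e2]
      have r1 : (a+a)*(a+a+2) = 4*(a*a+a) := by ring
      have r2 : (a+a+2)*(a+a+2+2) = 4*(a*a+3*a+2) := by ring
      omega
    · have e1 : ¬ Even (2*a+1) := by simp [Nat.even_add_one, parity_simps]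
      have e2 : ¬ Even (2*a+1+2) := by simp [Nat.even_add_one, parity_simps]
      rw [if_neg e1] at ih
      rw [if_neg e2]
      have r1 : (2*a+1+1)^2 = 4*(a*a+2*a+1) := by ring
      have r2 : (2*a+1+2+1)^2 = 4*(a*a+4*a+4) := by ring
      omega

/-- Let `m ≥ 1`. For every `d ≥ m − 1` there exists a `2d`-separated subset `S` of
`Δ(m−1, 2d+1) ⊆ ℤ_{≥0}^m` with `|S| = m(m+2)/4` if `m` is even and `|S| = (m+1)²/4`
if `m` is odd. -/
theorem stmt15 (m : ℕ) (hm : 1 ≤ m) (d : ℕ) (hd : m - 1 ≤ d) :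
    ∃ S : Finset (Fin m → ℕ),
      (∀ v ∈ S, ∑ j, v j = 2 * d + 1) ∧
      (∀ v ∈ S, ∀ w ∈ S, v ≠ w → 2 * d < ∑ j, Nat.dist (v j) (w j)) ∧
      S.card = if Even m then m * (m + 2) / 4 else (m + 1) ^ 2 / 4 := by
  classical
  set T : Finset ((_ : ℕ) × ℕ) :=
    (Finset.range m).sigma (fun j => Finset.range (m - 2*j)) with hT
  set F : ((_ : ℕ) × ℕ) → (Fin m → ℕ) :=
    fun p => fun i => st15pt d p.1 p.2 ↑i with hF
  have hmem : ∀ p ∈ T, p.2 + 2*p.1 < m := by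
    intro p hp
    rw [hT, Finset.mem_sigma, Finset.mem_range, Finset.mem_range] at hp
    omega
  have hsum : ∀ p ∈ T, (∑ i : Fin m, F p i) = 2*d + 1 := by
    intro p hp
    rw [hF]
    rw [Fin.sum_univ_eq_sum_range (fun i => st15pt d p.1 p.2 i) m]
    exact st15_sum m d p.1 p.2 hd (hmem p hp)
  have hov : ∀ p ∈ T, ∀ q ∈ T, p ≠ q →
      (∑ i ∈ Finset.range m, min (st15pt d p.1 p.2 i) (st15pt d q.1 q.2 i)) ≤ d := by
    intro p hp q hq hpq
    refine st15_overlap m d hd (hmem p hp) (hmem q hq) ?_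
    rintro ⟨e1, e2⟩
    exact hpq (Sigma.ext e1 (heq_of_eq e2))
  refine ⟨T.image F, ?_, ?_, ?_⟩
  · intro v hv
    obtain ⟨p, hp, rfl⟩ := Finset.mem_image.1 hv
    exact hsum p hp
  · intro v hv w hw hvw
    obtain ⟨p, hp, rfl⟩ := Finset.mem_image.1 hv
    obtain ⟨q, hq, rfl⟩ := Finset.mem_image.1 hw
    have hpq : p ≠ q := fun e => hvw (by rw [e])
    have hov' := hov p hp q hq hpq
    have hs1 := hsum p hp
    have hs2 := hsum q hq
    rw [hF] at hs1 hs2 ⊢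
    rw [Fin.sum_univ_eq_sum_range (fun i => st15pt d p.1 p.2 i) m] at hs1
    rw [Fin.sum_univ_eq_sum_range (fun i => st15pt d q.1 q.2 i) m] at hs2
    rw [Fin.sum_univ_eq_sum_range
      (fun i => Nat.dist (st15pt d p.1 p.2 i) (st15pt d q.1 q.2 i)) m]
    have key : (∑ i ∈ Finset.range m, Nat.dist (st15pt d p.1 p.2 i) (st15pt d q.1 q.2 i))
        + 2 * (∑ i ∈ Finset.range m, min (st15pt d p.1 p.2 i) (st15pt d q.1 q.2 i))
        = (∑ i ∈ Finset.range m, st15pt d p.1 p.2 i)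
        + (∑ i ∈ Finset.range m, st15pt d q.1 q.2 i) := by
      rw [Finset.mul_sum, ← Finset.sum_add_distrib, ← Finset.sum_add_distrib]
      refine Finset.sum_congr rfl ?_
      intro i _
      have : Nat.dist (st15pt d p.1 p.2 i) (st15pt d q.1 q.2 i)
          = (st15pt d p.1 p.2 i) - (st15pt d q.1 q.2 i)
            + ((st15pt d q.1 q.2 i) - (st15pt d p.1 p.2 i)) := rfl
      omega
    omega
  · have hinj : Set.InjOn F T := by
      intro p hp q hq hFeq
      by_contra hpq
      have hov' := hov p (Finset.mem_coe.1 hp) q (Finset.mem_coe.1 hq) hpq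
      have hs1 := hsum p (Finset.mem_coe.1 hp)
      rw [hF] at hs1
      rw [Fin.sum_univ_eq_sum_range (fun i => st15pt d p.1 p.2 i) m] at hs1
      have heqsum : (∑ i ∈ Finset.range m, min (st15pt d p.1 p.2 i) (st15pt d q.1 q.2 i))
          = ∑ i ∈ Finset.range m, st15pt d p.1 p.2 i := by
        refine Finset.sum_congr rfl ?_
        intro i hi
        have hlt : i < m := Finset.mem_range.1 hi
        have e := congrFun hFeq (⟨i, hlt⟩ : Fin m)
        rw [hF] at e
        simp only [Fin.val_mk] at e
        rw [← e, min_self]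
      rw [heqsum, hs1] at hov'
      omega
    rw [Finset.card_image_of_injOn hinj, hT, Finset.card_sigma]
    simp only [Finset.card_range]
    have hc := st15_count m
    by_cases he : Even m
    · rw [if_pos he] at hc ⊢; omega
    · rw [if_neg he] at hc ⊢; omega
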